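/- arXiv:2502.00453 — 2 statements merged into one kernel-verified Lean document; each statement's English description precedes it below -/
import Mathlib

section
/- For the embedded chain P of the M/G/1 queue with parameter 1 < z < 2 and the cost function c given by c(0) = 0 and c(i) = ((z−1)/z)^i for i ≥ 1, the potential is φ(i) = (1/(2−z) − (z²−z+1)/z^i)·(z−1)^{i−1} for every i. -/
open scoped ENNReal
open Filter Topology

/-- Matrix powers of a nonnegative kernel on ℕ, values in `[0,∞]`. -/
noncomputable def matPow (P : ℕ → ℕ → ℝ≥0∞) : ℕ → ℕ → ℕ → ℝ≥0∞
  | 0, i, j => if i = j then 1 else 0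
  | k + 1, i, j => ∑' l : ℕ, matPow P k i l * P l j

/-- The potential `φ(i) = ∑_{k=0}^∞ ∑_j P^k(i,j) c(j)`. -/
noncomputable def potential (P : ℕ → ℕ → ℝ≥0∞) (c : ℕ → ℝ≥0∞) (i : ℕ) : ℝ≥0∞ :=
  ∑' k : ℕ, ∑' j : ℕ, matPow P k i j * c j

/-- The Green matrix `G(i,j) = ∑_{k=0}^∞ P^k(i,j)`. -/
noncomputable def green (P : ℕ → ℕ → ℝ≥0∞) (i j : ℕ) : ℝ≥0∞ :=
  ∑' k : ℕ, matPow P k i j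

/-- `P_m^{(k+)} = ∑_{i=k}^∞ P(m,i)`. -/
noncomputable def Pplus (P : ℕ → ℕ → ℝ≥0∞) (m k : ℕ) : ℝ≥0∞ :=
  ∑' l : ℕ, P m (k + l)

/-- `H P i m = H_m^{(i)}`: `H_i^{(i)} = 1` and
`H_m^{(i)} = (1/P(m,m-1)) ∑_{k=m+1}^{i} P_m^{(k+)} H_k^{(i)}` for `1 ≤ m < i`. -/
noncomputable def H (P : ℕ → ℕ → ℝ≥0∞) (i : ℕ) : ℕ → ℝ≥0∞
  | m =>
    if i ≤ m then 1
    else (P m (m - 1))⁻¹ *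
      ∑ k ∈ (Finset.Ioc m i).attach, Pplus P m k.1 * H P i k.1
  termination_by m => i - m
  decreasing_by
    have h := Finset.mem_Ioc.mp k.2
    omega

/-- The ratio `r_n(i) = (∑_{m=i+1}^n H_m^{(n)}) / (∑_{k=1}^n P_0^{(k+)} H_k^{(n)})`. -/
noncomputable def ratio (P : ℕ → ℕ → ℝ≥0∞) (i n : ℕ) : ℝ :=
  (∑ m ∈ Finset.Icc (i + 1) n, (H P n m).toReal) /
    (∑ k ∈ Finset.Icc 1 n, (Pplus P 0 k).toReal * (H P n k).toReal)

/-- The embedded chain of the `M/G/1` queue with parameter `z`: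
`P(0,j) = a_j = (z-1)/z^(j+1)`, and for `i ≥ 1`, `P(i,j) = a_{j-i+1} = (z-1)/z^(j-i+2)`
for `j ≥ i-1` and `P(i,j) = 0` for `j < i-1`. -/
noncomputable def mG1 (z : ℝ) : ℕ → ℕ → ℝ≥0∞ := fun i j =>
  if i = 0 then ENNReal.ofReal ((z - 1) / z ^ (j + 1))
  else if i - 1 ≤ j then ENNReal.ofReal ((z - 1) / z ^ (j - (i - 1) + 1))
  else 0

namespace MG1aux

/-! ### generalities on `matPow` -/

lemma matPow_succ_left (P : ℕ → ℕ → ℝ≥0∞) (k : ℕ) :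
    ∀ i j, matPow P (k + 1) i j = ∑' l, P i l * matPow P k l j := by
  induction k with
  | zero =>
    intro i j
    show (∑' l, matPow P 0 i l * P l j) = _
    simp only [matPow]
    rw [tsum_eq_single i (by intro b hb; simp [Ne.symm hb]),
      tsum_eq_single j (by intro b hb; simp [hb])]
    simp
  | succ n ih =>
    intro i j
    calc matPow P (n + 2) i j = ∑' l, matPow P (n + 1) i l * P l j := rfl
      _ = ∑' l, (∑' m, P i m * matPow P n m l) * P l j := by
          exact tsum_congr fun l => by rw [ih]
      _ = ∑' l, ∑' m, P i m * matPow P n m l * P l j := by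
          exact tsum_congr fun l => (ENNReal.tsum_mul_right).symm
      _ = ∑' m, ∑' l, P i m * matPow P n m l * P l j := ENNReal.tsum_comm
      _ = ∑' m, P i m * ∑' l, matPow P n m l * P l j := by
          refine tsum_congr fun m => ?_
          rw [← ENNReal.tsum_mul_left]
          exact tsum_congr fun l => by ring
      _ = ∑' m, P i m * matPow P (n + 1) m j := rfl

/-! ### the `M/G/1` kernel -/

lemma mG1_eq (z : ℝ) (i j : ℕ) :
    mG1 z i j = if i - 1 ≤ j then ENNReal.ofReal ((z - 1) / z ^ (j - (i - 1) + 1)) else 0 := by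
  rcases Nat.eq_zero_or_pos i with h | h
  · subst h; simp [mG1]
  · have h0 : i ≠ 0 := by omega
    simp [mG1, h0]

lemma row_apply {z : ℝ} (hz1 : 1 < z) (i : ℕ) (g : ℕ → ℝ) (hg : ∀ j, 0 ≤ g j)
    (hs : Summable fun m => (z - 1) / z ^ (m + 1) * g (m + (i - 1))) :
    ∑' j, mG1 z i j * ENNReal.ofReal (g j)
      = ENNReal.ofReal (∑' m, (z - 1) / z ^ (m + 1) * g (m + (i - 1))) := by
  have hz0 : (0:ℝ) < z := lt_trans one_pos hz1
  have ha : ∀ m : ℕ, 0 ≤ (z - 1) / z ^ (m + 1) :=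
    fun m => div_nonneg (by linarith) (pow_pos hz0 _).le
  rw [ENNReal.ofReal_tsum_of_nonneg (fun m => mul_nonneg (ha m) (hg _)) hs]
  have hinj : Function.Injective (fun m : ℕ => m + (i - 1)) := fun a b h => by
    simpa using h
  rw [← Function.Injective.tsum_eq hinj
    (f := fun j => mG1 z i j * ENNReal.ofReal (g j)) ?_]
  · apply tsum_congr; intro m
    have h1 : i - 1 ≤ m + (i - 1) := by omega
    have h2 : m + (i - 1) - (i - 1) = m := by omega
    rw [mG1_eq, if_pos h1, h2, ← ENNReal.ofReal_mul (ha m)]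
  · intro j hj
    rw [Function.mem_support] at hj
    by_cases h : i - 1 ≤ j
    · exact ⟨j - (i - 1), by simp; omega⟩
    · exfalso; apply hj; rw [mG1_eq, if_neg h, zero_mul]

/-- geometric sums against the row `a_m = (z-1)/z^(m+1)` -/
lemma sum_a_pow {z : ℝ} (hz1 : 1 < z) (d : ℕ) (r : ℝ) (h0 : 0 ≤ r) (hr : r < z) :
    (Summable fun m => (z - 1) / z ^ (m + 1) * r ^ (m + d)) ∧
      ∑' m, (z - 1) / z ^ (m + 1) * r ^ (m + d) = (z - 1) * r ^ d / (z - r) := by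
  have hz0 : (0:ℝ) < z := lt_trans one_pos hz1
  have hq0 : 0 ≤ r / z := div_nonneg h0 hz0.le
  have hq1 : r / z < 1 := (div_lt_one hz0).mpr hr
  have hterm : ∀ m : ℕ, (z - 1) / z ^ (m + 1) * r ^ (m + d)
      = (z - 1) * r ^ d / z * (r / z) ^ m := by
    intro m
    rw [pow_add, div_pow, pow_succ]
    field_simp
    ring
  constructor
  · apply Summable.congr ((summable_geometric_of_lt_one hq0 hq1).mul_left ((z - 1) * r ^ d / z))
    intro m; rw [hterm m]
  · rw [tsum_congr hterm, tsum_mul_left, tsum_geometric_of_lt_one hq0 hq1]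
    have h1 : 1 - r / z ≠ 0 := by
      intro h; apply absurd hq1; simp [sub_eq_zero] at h; rw [← h]; simp
    have h2 : z - r ≠ 0 := by intro h; rw [sub_eq_zero] at h; linarith
    field_simp

/-! ### the explicit potential candidate -/

noncomputable def psiR (z : ℝ) (i : ℕ) : ℝ :=
  (1 / (2 - z) * (z - 1) ^ i - (z ^ 2 - z + 1) * ((z - 1) / z) ^ i) / (z - 1)

noncomputable def cR (z : ℝ) (i : ℕ) : ℝ := if i = 0 then 0 else ((z - 1) / z) ^ i

noncomputable def psiE (z : ℝ) (i : ℕ) : ℝ≥0∞ := ENNReal.ofReal (psiR z i)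

noncomputable def cE (z : ℝ) : ℕ → ℝ≥0∞ :=
  fun j => if j = 0 then 0 else ENNReal.ofReal (((z - 1) / z) ^ j)

lemma cE_eq (z : ℝ) (j : ℕ) : cE z j = ENNReal.ofReal (cR z j) := by
  unfold cE cR
  split <;> simp

noncomputable def fE (z : ℝ) (k i : ℕ) : ℝ≥0∞ :=
  ∑' j, matPow (mG1 z) k i j * cE z j

lemma potential_eq (z : ℝ) (i : ℕ) :
    potential (mG1 z) (cE z) i = ∑' k, fE z k i := rfl

section
variable {z : ℝ} (hz1 : 1 < z) (hz2 : z < 2)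
include hz1 hz2

lemma cR_nonneg (i : ℕ) : 0 ≤ cR z i := by
  have hz0 : (0:ℝ) < z := by linarith
  unfold cR
  split
  · exact le_refl 0
  · exact pow_nonneg (div_nonneg (by linarith) hz0.le) _

lemma psiR_sub_cR_nonneg (i : ℕ) : cR z i ≤ psiR z i := by
  have hz0 : (0:ℝ) < z := by linarith
  have hz1' : (0:ℝ) < z - 1 := by linarith
  have h2z : (0:ℝ) < 2 - z := by linarith
  have hzi : (0:ℝ) < z ^ i := pow_pos hz0 i
  rcases Nat.eq_zero_or_pos i with h | h
  · subst h
    simp only [cR, if_pos rfl, psiR, pow_zero, mul_one]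
    apply div_nonneg _ hz1'.le
    have : (2 - z) * (z ^ 2 - z + 1) ≤ 1 := by nlinarith [pow_pos hz1' 3, sq_nonneg (z-1)]
    have h1 : z ^ 2 - z + 1 ≤ 1 / (2 - z) := by
      rw [le_div_iff₀ h2z]; nlinarith
    linarith
  · obtain ⟨d, rfl⟩ : ∃ d, i = d + 1 := ⟨i - 1, by omega⟩
    rw [cR, if_neg (Nat.succ_ne_zero d), psiR, le_div_iff₀ hz1']
    have hα : z ≤ 1 / (2 - z) := by
      rw [le_div_iff₀ h2z]; nlinarith [sq_nonneg (z - 1)]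
    have hw : ((z - 1) / z) ^ (d + 1) = (z - 1) ^ (d + 1) / z ^ (d + 1) := div_pow _ _ _
    have hzd : z ^ 1 ≤ z ^ (d + 1) := pow_le_pow_right₀ hz1.le (by omega)
    have key : z ^ 2 * (z - 1) ^ (d + 1) / z ^ (d + 1) ≤ (1 / (2 - z)) * (z - 1) ^ (d + 1) := by
      rw [div_le_iff₀ (pow_pos hz0 _)]
      have h1 : z * z ^ 1 ≤ z * z ^ (d + 1) :=
        mul_le_mul_of_nonneg_left hzd hz0.le
      calc z ^ 2 * (z - 1) ^ (d + 1) = (z * z ^ 1) * (z - 1) ^ (d + 1) := by ring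
        _ ≤ (z * z ^ (d + 1)) * (z - 1) ^ (d + 1) :=
            mul_le_mul_of_nonneg_right h1 (pow_nonneg hz1'.le _)
        _ ≤ ((1 / (2 - z)) * z ^ (d + 1)) * (z - 1) ^ (d + 1) := by
            apply mul_le_mul_of_nonneg_right _ (pow_nonneg hz1'.le _)
            exact mul_le_mul_of_nonneg_right hα (pow_pos hz0 _).le
        _ = 1 / (2 - z) * (z - 1) ^ (d + 1) * z ^ (d + 1) := by ring
    rw [hw]
    have hβ : (z ^ 2 - z + 1) * ((z - 1) ^ (d + 1) / z ^ (d + 1))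
        + (z - 1) ^ (d+1) / z ^ (d+1) * (z - 1)
        = z ^ 2 * (z - 1) ^ (d + 1) / z ^ (d + 1) := by
      field_simp; ring
    linarith

lemma psiR_nonneg (i : ℕ) : 0 ≤ psiR z i :=
  le_trans (cR_nonneg hz1 hz2 i) (psiR_sub_cR_nonneg hz1 hz2 i)

lemma psi_row_real_d (d : ℕ) :
    (Summable fun m => (z - 1) / z ^ (m + 1) * psiR z (m + d)) ∧
      ∑' m, (z - 1) / z ^ (m + 1) * psiR z (m + d)
        = 1 / (2 - z) * (z - 1) ^ d - z * ((z - 1) / z) ^ d := by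
  have hz0 : (0:ℝ) < z := by linarith
  have hz1' : (0:ℝ) < z - 1 := by linarith
  have h2z : (0:ℝ) < 2 - z := by linarith
  have hq : z ^ 2 - z + 1 ≠ 0 := by nlinarith [sq_nonneg (z - 1)]
  have hw0 : 0 ≤ (z - 1) / z := div_nonneg hz1'.le hz0.le
  have hw1 : (z - 1) / z < 1 := by rw [div_lt_one hz0]; linarith
  have hwz : (z - 1) / z < z := lt_trans hw1 hz1
  obtain ⟨hs1, ht1⟩ := sum_a_pow hz1 d (z - 1) hz1'.le (by linarith)
  obtain ⟨hs2, ht2⟩ := sum_a_pow hz1 d ((z - 1) / z) hw0 hwz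
  have hzw2 : z - (z - 1) / z = (z ^ 2 - z + 1) / z := by field_simp; ring
  have hzz1 : z - (z - 1) = 1 := by ring
  rw [hzw2] at ht2
  rw [hzz1] at ht1
  have hterm : ∀ m : ℕ, (z - 1) / z ^ (m + 1) * psiR z (m + d)
      = (1 / (2 - z) / (z - 1)) * ((z - 1) / z ^ (m + 1) * (z - 1) ^ (m + d))
        - ((z ^ 2 - z + 1) / (z - 1)) * ((z - 1) / z ^ (m + 1) * ((z - 1) / z) ^ (m + d)) := by
    intro m
    have lin : ∀ (a X Y : ℝ), a * ((1 / (2 - z) * X - (z ^ 2 - z + 1) * Y) / (z - 1))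
        = (1 / (2 - z) / (z - 1)) * (a * X) - ((z ^ 2 - z + 1) / (z - 1)) * (a * Y) := by
      intros a X Y
      field_simp
    rw [psiR, lin]
  have hsum : Summable fun m => (z - 1) / z ^ (m + 1) * psiR z (m + d) := by
    apply Summable.congr ((hs1.mul_left _).sub (hs2.mul_left _))
    intro m; rw [hterm m]
  refine ⟨hsum, ?_⟩
  rw [tsum_congr hterm, Summable.tsum_sub (hs1.mul_left _) (hs2.mul_left _),
    tsum_mul_left, tsum_mul_left, ht1, ht2]
  have key : ∀ X Y : ℝ, (1 / (2 - z) / (z - 1)) * ((z - 1) * X / 1)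
      - ((z ^ 2 - z + 1) / (z - 1)) * ((z - 1) * Y / ((z ^ 2 - z + 1) / z))
      = 1 / (2 - z) * X - z * Y := by
    intro X Y
    field_simp
  exact key _ _

lemma psi_row_real (i : ℕ) :
    (Summable fun m => (z - 1) / z ^ (m + 1) * psiR z (m + (i - 1))) ∧
      ∑' m, (z - 1) / z ^ (m + 1) * psiR z (m + (i - 1)) = psiR z i - cR z i := by
  have hz0 : (0:ℝ) < z := by linarith
  have hz1' : (0:ℝ) < z - 1 := by linarith
  have h2z : (0:ℝ) < 2 - z := by linarith
  obtain ⟨hs, ht⟩ := psi_row_real_d hz1 hz2 (i - 1)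
  refine ⟨hs, ?_⟩
  rw [ht]
  rcases Nat.eq_zero_or_pos i with h | h
  · subst h
    simp only [Nat.zero_sub, pow_zero, mul_one, psiR, cR, if_pos rfl, ↓reduceIte, sub_zero]
    field_simp
    ring
  · obtain ⟨e, rfl⟩ : ∃ e, i = e + 1 := ⟨i - 1, by omega⟩
    have hde : e + 1 - 1 = e := by omega
    rw [hde, psiR, cR, if_neg (Nat.succ_ne_zero e), div_pow, div_pow,
      pow_succ (z - 1) e, pow_succ z e]
    have hZ : (z:ℝ) ^ e ≠ 0 := pow_ne_zero _ hz0.ne'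
    have key : ∀ X Z : ℝ, Z ≠ 0 →
        1 / (2 - z) * X - z * (X / Z)
        = (1 / (2 - z) * (X * (z - 1)) - (z ^ 2 - z + 1) * (X * (z - 1) / (Z * z))) / (z - 1)
          - X * (z - 1) / (Z * z) := by
      intro X Z hZ
      field_simp
      ring
    exact key _ _ hZ

/-! ### the fixed point equation in `ℝ≥0∞` -/

lemma psi_fixed (i : ℕ) :
    cE z i + ∑' j, mG1 z i j * psiE z j = psiE z i := by
  obtain ⟨hs, ht⟩ := psi_row_real hz1 hz2 i
  have h0 := row_apply hz1 i (psiR z) (psiR_nonneg hz1 hz2) hs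
  simp only [psiE]
  rw [h0, ht, cE_eq]
  rw [← ENNReal.ofReal_add (cR_nonneg hz1 hz2 i)
    (sub_nonneg.mpr (psiR_sub_cR_nonneg hz1 hz2 i))]
  congr 1
  ring

/-! ### upper bound: partial sums of the potential are below `psiE` -/

lemma fE_zero (i : ℕ) : fE z 0 i = cE z i := by
  unfold fE
  have : ∀ b, b ≠ i → matPow (mG1 z) 0 i b * cE z b = 0 := by
    intro b hb
    simp [matPow, Ne.symm hb]
  rw [tsum_eq_single i this]
  simp [matPow]

lemma fE_succ (k i : ℕ) : fE z (k + 1) i = ∑' l, mG1 z i l * fE z k l := by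
  unfold fE
  calc ∑' j, matPow (mG1 z) (k + 1) i j * cE z j
      = ∑' j, (∑' l, mG1 z i l * matPow (mG1 z) k l j) * cE z j :=
        tsum_congr fun j => by rw [matPow_succ_left]
    _ = ∑' j, ∑' l, mG1 z i l * matPow (mG1 z) k l j * cE z j :=
        tsum_congr fun j => (ENNReal.tsum_mul_right).symm
    _ = ∑' l, ∑' j, mG1 z i l * matPow (mG1 z) k l j * cE z j := ENNReal.tsum_comm
    _ = ∑' l, mG1 z i l * ∑' j, matPow (mG1 z) k l j * cE z j := by
        refine tsum_congr fun l => ?_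
        rw [← ENNReal.tsum_mul_left]
        exact tsum_congr fun j => by ring

lemma sumP (K i : ℕ) :
    ∑' l, mG1 z i l * ∑ k ∈ Finset.range K, fE z k l
      = ∑ k ∈ Finset.range K, fE z (k + 1) i := by
  calc ∑' l, mG1 z i l * ∑ k ∈ Finset.range K, fE z k l
      = ∑' l, ∑ k ∈ Finset.range K, mG1 z i l * fE z k l :=
        tsum_congr fun l => Finset.mul_sum _ _ _
    _ = ∑ k ∈ Finset.range K, ∑' l, mG1 z i l * fE z k l :=
        Summable.tsum_finsetSum fun k _ => ENNReal.summable
    _ = ∑ k ∈ Finset.range K, fE z (k + 1) i :=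
        Finset.sum_congr rfl fun k _ => (fE_succ hz1 hz2 k i).symm

lemma partial_le (K i : ℕ) : ∑ k ∈ Finset.range K, fE z k i ≤ psiE z i := by
  induction K generalizing i with
  | zero => simp
  | succ K ih =>
    rw [Finset.sum_range_succ', fE_zero hz1 hz2, sumP hz1 hz2 K i |>.symm]
    calc (∑' l, mG1 z i l * ∑ k ∈ Finset.range K, fE z k l) + cE z i
        ≤ (∑' l, mG1 z i l * psiE z l) + cE z i := by
          apply add_le_add_left
          exact ENNReal.tsum_le_tsum fun l => mul_le_mul_right (ih l) _
      _ = psiE z i := by rw [add_comm]; exact psi_fixed hz1 hz2 i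

lemma potential_le (i : ℕ) : potential (mG1 z) (cE z) i ≤ psiE z i := by
  rw [potential_eq]
  refine Summable.tsum_le_of_sum_le ENNReal.summable fun s => ?_
  obtain ⟨n, hn⟩ := s.exists_nat_subset_range
  exact le_trans (Finset.sum_le_sum_of_subset hn) (partial_le hz1 hz2 n i)

/-! ### lower bound via the contraction supersolution `(z/2)^i` -/

lemma Ph_le (i : ℕ) :
    ∑' j, mG1 z i j * ENNReal.ofReal ((z / 2) ^ j)
      ≤ ENNReal.ofReal (4 * (z - 1) / z ^ 2) * ENNReal.ofReal ((z / 2) ^ i) := by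
  have hz0 : (0:ℝ) < z := by linarith
  have hs0 : (0:ℝ) < z / 2 := by linarith
  have hsz : z / 2 < z := by linarith
  obtain ⟨hs, ht⟩ := sum_a_pow hz1 (i - 1) (z / 2) hs0.le hsz
  have hz1' : (0:ℝ) < z - 1 := by linarith
  rw [row_apply hz1 i (fun j => (z / 2) ^ j) (fun j => (pow_pos hs0 j).le) hs, ht,
    ← ENNReal.ofReal_mul (by positivity)]
  apply ENNReal.ofReal_le_ofReal
  have hzz : z - z / 2 = z / 2 := by ring
  rw [hzz]
  rcases Nat.eq_zero_or_pos i with h | h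
  · subst h
    simp only [Nat.zero_sub, pow_zero, mul_one]
    rw [div_le_iff₀ hs0]
    have he : 4 * (z - 1) / z ^ 2 * (z / 2) = 2 * (z - 1) / z := by field_simp; ring
    rw [he, le_div_iff₀ hz0]
    nlinarith
  · obtain ⟨e, rfl⟩ : ∃ e, i = e + 1 := ⟨i - 1, by omega⟩
    have hde : e + 1 - 1 = e := by omega
    rw [hde, pow_succ]
    apply le_of_eq
    have key : ∀ Y : ℝ, (z - 1) * Y / (z / 2) = 4 * (z - 1) / z ^ 2 * (Y * (z / 2)) := by
      intro Y
      field_simp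
      ring
    exact key _

lemma psi_le_Ch (i : ℕ) :
    psiE z i ≤ ENNReal.ofReal (1 / ((2 - z) * (z - 1))) * ENNReal.ofReal ((z / 2) ^ i) := by
  have hz0 : (0:ℝ) < z := by linarith
  have hz1' : (0:ℝ) < z - 1 := by linarith
  have h2z : (0:ℝ) < 2 - z := by linarith
  rw [psiE, ← ENNReal.ofReal_mul (le_of_lt (div_pos one_pos (mul_pos h2z hz1')))]
  apply ENNReal.ofReal_le_ofReal
  have h1 : psiR z i ≤ 1 / (2 - z) * (z - 1) ^ i / (z - 1) := by
    rw [psiR]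
    gcongr
    have : 0 ≤ (z ^ 2 - z + 1) * ((z - 1) / z) ^ i :=
      mul_nonneg (by nlinarith) (pow_nonneg (div_nonneg hz1'.le hz0.le) i)
    linarith
  have h2 : (z - 1) ^ i ≤ (z / 2) ^ i :=
    pow_le_pow_left₀ hz1'.le (by linarith) i
  calc psiR z i ≤ 1 / (2 - z) * (z - 1) ^ i / (z - 1) := h1
    _ ≤ 1 / (2 - z) * (z / 2) ^ i / (z - 1) := by
        exact div_le_div_of_nonneg_right
          (mul_le_mul_of_nonneg_left h2 (le_of_lt (div_pos one_pos h2z))) hz1'.le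
    _ = 1 / ((2 - z) * (z - 1)) * (z / 2) ^ i := by
        field_simp

lemma psi_le_partial (K : ℕ) : ∀ i,
    psiE z i ≤ (∑ k ∈ Finset.range K, fE z k i)
      + ENNReal.ofReal (4 * (z - 1) / z ^ 2) ^ K
          * (ENNReal.ofReal (1 / ((2 - z) * (z - 1))) * ENNReal.ofReal ((z / 2) ^ i)) := by
  induction K with
  | zero =>
    intro i
    simpa using psi_le_Ch hz1 hz2 i
  | succ K ih =>
    intro i
    set rho := ENNReal.ofReal (4 * (z - 1) / z ^ 2) with hrho
    set C := ENNReal.ofReal (1 / ((2 - z) * (z - 1))) with hC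
    calc psiE z i = cE z i + ∑' j, mG1 z i j * psiE z j := (psi_fixed hz1 hz2 i).symm
      _ ≤ cE z i + ∑' j, mG1 z i j
            * ((∑ k ∈ Finset.range K, fE z k j)
              + rho ^ K * (C * ENNReal.ofReal ((z / 2) ^ j))) := by
          apply add_le_add_right
          exact ENNReal.tsum_le_tsum fun j => mul_le_mul_right (ih j) _
      _ = cE z i + ((∑' j, mG1 z i j * ∑ k ∈ Finset.range K, fE z k j)
            + rho ^ K * C * ∑' j, mG1 z i j * ENNReal.ofReal ((z / 2) ^ j)) := by
          congr 1
          have hdist : ∀ j : ℕ,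
              mG1 z i j * ((∑ k ∈ Finset.range K, fE z k j)
                  + rho ^ K * (C * ENNReal.ofReal ((z / 2) ^ j)))
              = mG1 z i j * (∑ k ∈ Finset.range K, fE z k j)
                + rho ^ K * C * (mG1 z i j * ENNReal.ofReal ((z / 2) ^ j)) := by
            intro j; ring
          rw [tsum_congr hdist, ENNReal.tsum_add, ENNReal.tsum_mul_left]
      _ ≤ cE z i + ((∑' j, mG1 z i j * ∑ k ∈ Finset.range K, fE z k j)
            + rho ^ K * C * (rho * ENNReal.ofReal ((z / 2) ^ i))) := by
          apply add_le_add_right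
          apply add_le_add_right
          exact mul_le_mul_right (Ph_le hz1 hz2 i) _
      _ = (∑ k ∈ Finset.range (K + 1), fE z k i)
            + rho ^ (K + 1) * (C * ENNReal.ofReal ((z / 2) ^ i)) := by
          rw [sumP hz1 hz2 K i, Finset.sum_range_succ', fE_zero hz1 hz2, pow_succ]
          ring

lemma psi_le_potential (i : ℕ) : psiE z i ≤ potential (mG1 z) (cE z) i := by
  have hz0 : (0:ℝ) < z := by linarith
  have hrho1 : ENNReal.ofReal (4 * (z - 1) / z ^ 2) < 1 := by
    apply ENNReal.ofReal_lt_one.mpr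
    rw [div_lt_one (by positivity)]
    nlinarith [sq_nonneg (z - 2)]
  have hCne : ENNReal.ofReal (1 / ((2 - z) * (z - 1))) * ENNReal.ofReal ((z / 2) ^ i) ≠ ⊤ :=
    ENNReal.mul_ne_top ENNReal.ofReal_ne_top ENNReal.ofReal_ne_top
  have h2 : Tendsto (fun K => ENNReal.ofReal (4 * (z - 1) / z ^ 2) ^ K
      * (ENNReal.ofReal (1 / ((2 - z) * (z - 1))) * ENNReal.ofReal ((z / 2) ^ i)))
      atTop (𝓝 0) := by
    have := ENNReal.Tendsto.mul_const
      (ENNReal.tendsto_pow_atTop_nhds_zero_of_lt_one hrho1) (Or.inr hCne)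
    simpa using this
  have h1 : Tendsto (fun K => ∑ k ∈ Finset.range K, fE z k i) atTop
      (𝓝 (potential (mG1 z) (cE z) i)) := by
    rw [potential_eq]
    exact ENNReal.tendsto_nat_tsum _
  have h3 : Tendsto (fun K => (∑ k ∈ Finset.range K, fE z k i)
      + ENNReal.ofReal (4 * (z - 1) / z ^ 2) ^ K
        * (ENNReal.ofReal (1 / ((2 - z) * (z - 1))) * ENNReal.ofReal ((z / 2) ^ i)))
      atTop (𝓝 (potential (mG1 z) (cE z) i)) := by
    have := Tendsto.add h1 h2
    simpa using this
  exact ge_of_tendsto' h3 fun K => psi_le_partial hz1 hz2 K i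

lemma psiR_final (i : ℕ) :
    psiR z i = (1 / (2 - z) - (z ^ 2 - z + 1) / z ^ i) * (z - 1) ^ ((i : ℤ) - 1) := by
  have hz0 : (0:ℝ) < z := by linarith
  have hz1' : (0:ℝ) < z - 1 := by linarith
  have hzp : (z - 1:ℝ) ^ ((i:ℤ) - 1) = (z - 1) ^ i / (z - 1) := by
    rw [zpow_sub_one₀ (ne_of_gt hz1') (i:ℤ), zpow_natCast, div_eq_mul_inv]
  rw [psiR, hzp, div_pow]
  have hZ : (z:ℝ) ^ i ≠ 0 := pow_ne_zero _ hz0.ne'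
  have key : ∀ X Z : ℝ, Z ≠ 0 →
      (1 / (2 - z) * X - (z ^ 2 - z + 1) * (X / Z)) / (z - 1)
        = (1 / (2 - z) - (z ^ 2 - z + 1) / Z) * (X / (z - 1)) := by
    intro X Z hZ
    field_simp
  exact key _ _ hZ

end
end MG1aux

theorem mG1_potential_formula (z : ℝ) (hz1 : 1 < z) (hz2 : z < 2) :
    ∀ i : ℕ,
      potential (mG1 z)
          (fun j => if j = 0 then 0 else ENNReal.ofReal (((z - 1) / z) ^ j)) i ≠ ∞ ∧
      (potential (mG1 z)
          (fun j => if j = 0 then 0 else ENNReal.ofReal (((z - 1) / z) ^ j)) i).toReal =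
        (1 / (2 - z) - (z ^ 2 - z + 1) / z ^ i) * (z - 1) ^ ((i : ℤ) - 1) := by
  intro i
  have hcE : (fun j => if j = 0 then 0 else ENNReal.ofReal (((z - 1) / z) ^ j))
      = MG1aux.cE z := rfl
  rw [hcE]
  have heq : potential (mG1 z) (MG1aux.cE z) i = MG1aux.psiE z i :=
    le_antisymm (MG1aux.potential_le hz1 hz2 i) (MG1aux.psi_le_potential hz1 hz2 i)
  rw [heq, MG1aux.psiE]
  refine ⟨ENNReal.ofReal_ne_top, ?_⟩
  rw [ENNReal.toReal_ofReal (MG1aux.psiR_nonneg hz1 hz2 i)]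
  exact MG1aux.psiR_final hz1 hz2 i
end

section
/- Let Q be an irreducible totally stable, conservative, upward skip-free Q-matrix on ℕ and c : ℕ → [0,∞) a finite nonnegative function. Then the potential satisfies ψ(i) = ∑_{m=i}^∞ ∑_{k=0}^{m} F̃_m^{(k)}·c(k)/Q(k,k+1) for every i (equality in [0,∞]); moreover ψ(i) < ∞ for all i if and only if ψ(0) < ∞. -/
open scoped ENNReal
open Filter Topology

/-- A totally stable, conservative Q-matrix on ℕ: nonnegative off-diagonal entries,
finite negative diagonal entries, and rows summing to zero. -/
structure IsQMatrix (Q : ℕ → ℕ → ℝ) : Prop where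
  offdiag_nonneg : ∀ i j : ℕ, i ≠ j → 0 ≤ Q i j
  diag_neg : ∀ i : ℕ, Q i i < 0
  row_sum_zero : ∀ i : ℕ, HasSum (Q i) 0

/-- The jump matrix `P_Q(i,j) = -Q(i,j)/Q(i,i)` for `j ≠ i`, `P_Q(i,i) = 0`. -/
noncomputable def jumpMatrix (Q : ℕ → ℕ → ℝ) : ℕ → ℕ → ℝ≥0∞ := fun i j =>
  if j = i then 0 else ENNReal.ofReal (-(Q i j) / Q i i)

/-- `c_Q(i) = -c(i)/Q(i,i)`. -/
noncomputable def cQ (Q : ℕ → ℕ → ℝ) (c : ℕ → ℝ) : ℕ → ℝ≥0∞ := fun i =>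
  ENNReal.ofReal (-(c i) / Q i i)

/-- Irreducibility of a Q-matrix: its jump matrix is irreducible. -/
def QIrreducible (Q : ℕ → ℕ → ℝ) : Prop :=
  ∀ i j : ℕ, ∃ k : ℕ, 0 < matPow (jumpMatrix Q) k i j

/-- The potential `ψ(i) = ∑_{k=0}^∞ ∑_j P_Q^k(i,j) c_Q(j)` of the CTMC with
Q-matrix `Q` and cost `c`; it is the minimal nonnegative solution of `-Qψ = c`. -/
noncomputable def ctPotential (Q : ℕ → ℕ → ℝ) (c : ℕ → ℝ) (i : ℕ) : ℝ≥0∞ :=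
  ∑' k : ℕ, ∑' j : ℕ, matPow (jumpMatrix Q) k i j * cQ Q c j

/-- Upward skip-free Q-matrix: `Q(i,i+1) > 0` and `Q(i,k) = 0` for `k ≥ i+2`. -/
def QUpwardSkipFree (Q : ℕ → ℕ → ℝ) : Prop :=
  (∀ i : ℕ, 0 < Q i (i + 1)) ∧ ∀ i k : ℕ, i + 2 ≤ k → Q i k = 0

/-- `Q_n^{(k-)} = ∑_{i=0}^k Q(n,i)`. -/
noncomputable def Qminus (Q : ℕ → ℕ → ℝ) (n k : ℕ) : ℝ :=
  ∑ l ∈ Finset.range (k + 1), Q n l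

/-- `Ftilde Q i n = F̃_n^{(i)}`: `F̃_i^{(i)} = 1` and
`F̃_n^{(i)} = (1/Q(n,n+1)) ∑_{k=i}^{n-1} Q_n^{(k-)} F̃_k^{(i)}` for `i < n`. -/
noncomputable def Ftilde (Q : ℕ → ℕ → ℝ) (i : ℕ) : ℕ → ℝ
  | n =>
    if n ≤ i then 1
    else (Q n (n + 1))⁻¹ *
      ∑ k ∈ (Finset.Ico i n).attach, Qminus Q n k.1 * Ftilde Q i k.1
  termination_by n => n
  decreasing_by
    have h := Finset.mem_Ico.mp k.2
    omega

namespace CTAux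

lemma matPow_zero (P : ℕ → ℕ → ℝ≥0∞) (i j : ℕ) :
    matPow P 0 i j = if i = j then 1 else 0 := rfl

lemma matPow_succ (P : ℕ → ℕ → ℝ≥0∞) (k i j : ℕ) :
    matPow P (k+1) i j = ∑' l : ℕ, matPow P k i l * P l j := rfl

lemma tsum_matPow_zero (P : ℕ → ℕ → ℝ≥0∞) (f : ℕ → ℝ≥0∞) (i : ℕ) :
    ∑' j : ℕ, matPow P 0 i j * f j = f i := by
  rw [tsum_eq_single i]
  · simp [matPow_zero]
  · intro b hb
    simp [matPow_zero, Ne.symm hb]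

lemma matPow_succ_left (P : ℕ → ℕ → ℝ≥0∞) (k : ℕ) : ∀ i j : ℕ,
    matPow P (k+1) i j = ∑' l : ℕ, P i l * matPow P k l j := by
  induction k with
  | zero =>
    intro i j
    rw [matPow_succ, tsum_eq_single i, tsum_eq_single j]
    · simp [matPow_zero]
    · intro b hb; simp [matPow_zero, hb]
    · intro b hb; simp [matPow_zero, Ne.symm hb]
  | succ k ih =>
    intro i j
    rw [matPow_succ]
    calc ∑' l : ℕ, matPow P (k+1) i l * P l j
        = ∑' l : ℕ, (∑' m : ℕ, P i m * matPow P k m l) * P l j := by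
          simp_rw [ih]
      _ = ∑' l : ℕ, ∑' m : ℕ, P i m * matPow P k m l * P l j := by
          simp_rw [ENNReal.tsum_mul_right]
      _ = ∑' m : ℕ, ∑' l : ℕ, P i m * (matPow P k m l * P l j) := by
          rw [ENNReal.tsum_comm]; simp_rw [mul_assoc]
      _ = ∑' m : ℕ, P i m * matPow P (k+1) m j := by
          simp_rw [ENNReal.tsum_mul_left, matPow_succ]

lemma tsum_matPow_succ_left (P : ℕ → ℕ → ℝ≥0∞) (f : ℕ → ℝ≥0∞) (k i : ℕ) :
    ∑' j : ℕ, matPow P (k+1) i j * f j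
      = ∑' l : ℕ, P i l * ∑' j : ℕ, matPow P k l j * f j := by
  calc ∑' j : ℕ, matPow P (k+1) i j * f j
      = ∑' j : ℕ, (∑' l : ℕ, P i l * matPow P k l j) * f j := by
        simp_rw [matPow_succ_left]
    _ = ∑' j : ℕ, ∑' l : ℕ, P i l * matPow P k l j * f j := by
        simp_rw [ENNReal.tsum_mul_right]
    _ = ∑' l : ℕ, ∑' j : ℕ, P i l * (matPow P k l j * f j) := by
        rw [ENNReal.tsum_comm]; simp_rw [mul_assoc]
    _ = ∑' l : ℕ, P i l * ∑' j : ℕ, matPow P k l j * f j := by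
        simp_rw [ENNReal.tsum_mul_left]

/-- The potential satisfies the fixed-point equation. -/
lemma ctPotential_fixed (Q : ℕ → ℕ → ℝ) (c : ℕ → ℝ) (i : ℕ) :
    ctPotential Q c i
      = cQ Q c i + ∑' j : ℕ, jumpMatrix Q i j * ctPotential Q c j := by
  set P := jumpMatrix Q with hP
  rw [ctPotential, tsum_eq_zero_add' ENNReal.summable, tsum_matPow_zero]
  congr 1
  calc ∑' k : ℕ, ∑' j : ℕ, matPow P (k+1) i j * cQ Q c j
      = ∑' k : ℕ, ∑' l : ℕ, P i l * ∑' j : ℕ, matPow P k l j * cQ Q c j := by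
        simp_rw [tsum_matPow_succ_left]
    _ = ∑' l : ℕ, P i l * ∑' k : ℕ, ∑' j : ℕ, matPow P k l j * cQ Q c j := by
        rw [ENNReal.tsum_comm]; simp_rw [ENNReal.tsum_mul_left]
    _ = ∑' l : ℕ, P i l * ctPotential Q c l := rfl

/-- The key induction for minimality. -/
lemma supersol_key (Q : ℕ → ℕ → ℝ) (c : ℕ → ℝ) (φ : ℕ → ℝ≥0∞)
    (hφ : ∀ i, cQ Q c i + ∑' j : ℕ, jumpMatrix Q i j * φ j ≤ φ i) :
    ∀ n i, (∑ k ∈ Finset.range n, ∑' j : ℕ, matPow (jumpMatrix Q) k i j * cQ Q c j)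
      + ∑' j : ℕ, matPow (jumpMatrix Q) n i j * φ j ≤ φ i := by
  set P := jumpMatrix Q with hP
  intro n
  induction n with
  | zero => intro i; simpa [tsum_matPow_zero] using le_rfl
  | succ n ih =>
    intro i
    have h1 : ∑ k ∈ Finset.range (n+1), ∑' j : ℕ, matPow P k i j * cQ Q c j
        = cQ Q c i + ∑ k ∈ Finset.range n, ∑' j : ℕ, matPow P (k+1) i j * cQ Q c j := by
      rw [Finset.sum_range_succ']
      rw [tsum_matPow_zero, add_comm]
    rw [h1, tsum_matPow_succ_left]
    have h2 : ∑ k ∈ Finset.range n, ∑' j : ℕ, matPow P (k+1) i j * cQ Q c j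
        = ∑' l : ℕ, P i l * ∑ k ∈ Finset.range n, ∑' j : ℕ, matPow P k l j * cQ Q c j := by
      simp_rw [tsum_matPow_succ_left]
      rw [← Summable.tsum_finsetSum (fun k _ => ENNReal.summable)]
      congr 1; funext l
      rw [Finset.mul_sum]
    rw [h2, add_assoc, ← ENNReal.tsum_add]
    have h3 : ∑' l : ℕ, (P i l * (∑ k ∈ Finset.range n, ∑' j : ℕ, matPow P k l j * cQ Q c j)
          + P i l * ∑' j : ℕ, matPow P n l j * φ j) ≤ ∑' l : ℕ, P i l * φ l := by
      apply ENNReal.tsum_le_tsum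
      intro l
      rw [← mul_add]
      exact mul_le_mul_right (ih l) _
    exact le_trans (add_le_add le_rfl h3) (hφ i)

/-- Minimality of the potential. -/
lemma ctPotential_min (Q : ℕ → ℕ → ℝ) (c : ℕ → ℝ) (φ : ℕ → ℝ≥0∞)
    (hφ : ∀ i, cQ Q c i + ∑' j : ℕ, jumpMatrix Q i j * φ j ≤ φ i) (i : ℕ) :
    ctPotential Q c i ≤ φ i := by
  rw [ctPotential, ENNReal.tsum_eq_iSup_nat]
  apply iSup_le
  intro n
  exact le_trans (le_add_right le_rfl) (supersol_key Q c φ hφ n i)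

lemma tsum_matPow_potential_le (Q : ℕ → ℕ → ℝ) (c : ℕ → ℝ) (n i : ℕ) :
    ∑' j : ℕ, matPow (jumpMatrix Q) n i j * ctPotential Q c j ≤ ctPotential Q c i := by
  have h := supersol_key Q c (ctPotential Q c)
    (fun i => (ctPotential_fixed Q c i).ge) n i
  exact le_trans le_add_self h

lemma potential_ne_top_propagate (Q : ℕ → ℕ → ℝ) (c : ℕ → ℝ)
    (hirr : QIrreducible Q) {a : ℕ} (ha : ctPotential Q c a ≠ ⊤) (b : ℕ) :
    ctPotential Q c b ≠ ⊤ := by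
  obtain ⟨k, hk⟩ := hirr a b
  intro hb
  have h1 : matPow (jumpMatrix Q) k a b * ctPotential Q c b ≤ ctPotential Q c a :=
    le_trans (ENNReal.le_tsum b) (tsum_matPow_potential_le Q c k a)
  rw [hb, ENNReal.mul_top hk.ne'] at h1
  exact ha (top_le_iff.mp h1)

/-! ### Real-side algebra -/

lemma rowsum {Q : ℕ → ℕ → ℝ} (hQ : IsQMatrix Q) (hup : QUpwardSkipFree Q) (i : ℕ) :
    ∑ j ∈ Finset.range (i+2), Q i j = 0 := by
  have h : ∀ b ∉ Finset.range (i+2), Q i b = 0 := by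
    intro b hb
    simp only [Finset.mem_range] at hb
    exact hup.2 i b (by omega)
  exact (hasSum_sum_of_ne_finset_zero h).unique (hQ.row_sum_zero i)

lemma Qminus_diag {Q : ℕ → ℕ → ℝ} (hQ : IsQMatrix Q) (hup : QUpwardSkipFree Q) (i : ℕ) :
    Qminus Q i i = -(Q i (i+1)) := by
  have h := rowsum hQ hup i
  rw [Finset.sum_range_succ] at h
  simp only [Qminus]
  linarith

lemma Qminus_nonneg {Q : ℕ → ℕ → ℝ} (hQ : IsQMatrix Q) {n l : ℕ} (h : l < n) :
    0 ≤ Qminus Q n l := by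
  apply Finset.sum_nonneg
  intro j hj
  simp only [Finset.mem_range] at hj
  exact hQ.offdiag_nonneg n j (by omega)

lemma Ftilde_of_le {Q : ℕ → ℕ → ℝ} {i n : ℕ} (h : n ≤ i) : Ftilde Q i n = 1 := by
  rw [Ftilde]; simp [h]

lemma Ftilde_mul {Q : ℕ → ℕ → ℝ} (hup : QUpwardSkipFree Q) {i n : ℕ} (h : i < n) :
    Q n (n+1) * Ftilde Q i n = ∑ k ∈ Finset.Ico i n, Qminus Q n k * Ftilde Q i k := by
  conv_lhs => rw [Ftilde]
  rw [if_neg (by omega), ← mul_assoc, mul_inv_cancel₀ (ne_of_gt (hup.1 n)), one_mul]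
  exact Finset.sum_attach (Finset.Ico i n) (fun k => Qminus Q n k * Ftilde Q i k)

lemma Ftilde_nonneg {Q : ℕ → ℕ → ℝ} (hQ : IsQMatrix Q) (hup : QUpwardSkipFree Q) (i : ℕ) :
    ∀ n, 0 ≤ Ftilde Q i n := by
  intro n
  induction n using Nat.strong_induction_on with
  | _ n ih =>
    rw [Ftilde]
    split
    · exact zero_le_one
    · next h =>
      apply mul_nonneg (inv_nonneg.mpr (hup.1 n).le)
      apply Finset.sum_nonneg
      intro k _
      have hk' := Finset.mem_Ico.mp k.2
      exact mul_nonneg (Qminus_nonneg hQ hk'.2) (ih k.1 hk'.2)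

/-- `e m = ∑_{k ≤ m} F̃_m^{(k)} c(k)/Q(k,k+1)`. -/
noncomputable def eFun (Q : ℕ → ℕ → ℝ) (c : ℕ → ℝ) (m : ℕ) : ℝ :=
  ∑ k ∈ Finset.range (m+1), Ftilde Q k m * c k / Q k (k+1)

lemma eFun_nonneg {Q : ℕ → ℕ → ℝ} {c : ℕ → ℝ} (hQ : IsQMatrix Q)
    (hup : QUpwardSkipFree Q) (hc : ∀ i, 0 ≤ c i) (m : ℕ) : 0 ≤ eFun Q c m := by
  apply Finset.sum_nonneg
  intro k _
  exact div_nonneg (mul_nonneg (Ftilde_nonneg hQ hup k m) (hc k)) (hup.1 k).le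

lemma sum_tri (f : ℕ → ℕ → ℝ) (n : ℕ) :
    ∑ l ∈ Finset.range n, ∑ k ∈ Finset.range (l+1), f l k
      = ∑ k ∈ Finset.range n, ∑ l ∈ Finset.Ico k n, f l k := by
  induction n with
  | zero => simp
  | succ n ih =>
    rw [Finset.sum_range_succ, ih,
      Finset.sum_range_succ (fun k => ∑ l ∈ Finset.Ico k (n+1), f l k)]
    have h1 : ∀ k ∈ Finset.range n, ∑ l ∈ Finset.Ico k (n+1), f l k
        = ∑ l ∈ Finset.Ico k n, f l k + f n k := by
      intro k hk
      rw [Finset.sum_Ico_succ_top (le_of_lt (Finset.mem_range.mp hk))]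
    rw [Finset.sum_congr rfl h1, Finset.sum_add_distrib]
    have h2 : ∑ l ∈ Finset.Ico n (n+1), f l n = f n n := by
      rw [Finset.sum_Ico_succ_top le_rfl, Finset.Ico_self, Finset.sum_empty, zero_add]
    rw [h2, Finset.sum_range_succ (fun k => f n k)]
    ring

lemma eFun_rec {Q : ℕ → ℕ → ℝ} {c : ℕ → ℝ} (hup : QUpwardSkipFree Q) (i : ℕ) :
    eFun Q c i * Q i (i+1) = c i + ∑ l ∈ Finset.range i, Qminus Q i l * eFun Q c l := by
  have hs : ∑ l ∈ Finset.range i, Qminus Q i l * eFun Q c l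
      = ∑ k ∈ Finset.range i, Ftilde Q k i * c k / Q k (k+1) * Q i (i+1) := by
    calc ∑ l ∈ Finset.range i, Qminus Q i l * eFun Q c l
        = ∑ l ∈ Finset.range i, ∑ k ∈ Finset.range (l+1),
            Qminus Q i l * (Ftilde Q k l * c k / Q k (k+1)) := by
          simp_rw [eFun, Finset.mul_sum]
      _ = ∑ k ∈ Finset.range i, ∑ l ∈ Finset.Ico k i,
            Qminus Q i l * (Ftilde Q k l * c k / Q k (k+1)) :=
          sum_tri (fun l k => Qminus Q i l * (Ftilde Q k l * c k / Q k (k+1))) i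
      _ = ∑ k ∈ Finset.range i, (c k / Q k (k+1))
            * ∑ l ∈ Finset.Ico k i, Qminus Q i l * Ftilde Q k l := by
          apply Finset.sum_congr rfl; intro k _
          rw [Finset.mul_sum]
          apply Finset.sum_congr rfl; intro l _; ring
      _ = ∑ k ∈ Finset.range i, (c k / Q k (k+1)) * (Q i (i+1) * Ftilde Q k i) := by
          apply Finset.sum_congr rfl; intro k hk
          rw [Ftilde_mul hup (Finset.mem_range.mp hk)]
      _ = ∑ k ∈ Finset.range i, Ftilde Q k i * c k / Q k (k+1) * Q i (i+1) := by
          apply Finset.sum_congr rfl; intro k _; ring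
  rw [eFun, Finset.sum_mul, Finset.sum_range_succ
    (fun k => Ftilde Q k i * c k / Q k (k+1) * Q i (i+1)), Ftilde_of_le le_rfl, one_mul,
    div_mul_cancel₀ _ (ne_of_gt (hup.1 i)), hs.symm]
  ring

lemma abel_sum (a v : ℕ → ℝ) (N : ℕ) :
    ∑ j ∈ Finset.range (N+1), a j * v j
      = ∑ l ∈ Finset.range N, (∑ j ∈ Finset.range (l+1), a j) * (v l - v (l+1))
        + (∑ j ∈ Finset.range (N+1), a j) * v N := by
  induction N with
  | zero => simp
  | succ N ih =>
    rw [Finset.sum_range_succ (fun j => a j * v j), ih,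
      Finset.sum_range_succ
        (fun l => (∑ j ∈ Finset.range (l+1), a j) * (v l - v (l+1))),
      Finset.sum_range_succ a (N+1)]
    ring

lemma Qv_of_diff {Q : ℕ → ℕ → ℝ} {c : ℕ → ℝ} (hQ : IsQMatrix Q) (hup : QUpwardSkipFree Q)
    (v : ℕ → ℝ) (hdiff : ∀ l, v l - v (l+1) = eFun Q c l) (n : ℕ) :
    ∑ j ∈ Finset.range (n+2), Q n j * v j = -(c n) := by
  rw [abel_sum (Q n) v (n+1), rowsum hQ hup n, zero_mul, add_zero, Finset.sum_range_succ]
  have h1 : ∀ l ∈ Finset.range n,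
      (∑ j ∈ Finset.range (l+1), Q n j) * (v l - v (l+1)) = Qminus Q n l * eFun Q c l := by
    intro l _
    rw [hdiff l]; rfl
  have h2 : (∑ j ∈ Finset.range (n+1), Q n j) = -(Q n (n+1)) := Qminus_diag hQ hup n
  rw [Finset.sum_congr rfl h1, hdiff n, h2]
  have he := eFun_rec (c := c) hup n
  linarith

lemma diff_of_Qv {Q : ℕ → ℕ → ℝ} {c : ℕ → ℝ} (hQ : IsQMatrix Q) (hup : QUpwardSkipFree Q)
    (v : ℕ → ℝ) (hQv : ∀ n, ∑ j ∈ Finset.range (n+2), Q n j * v j = -(c n)) :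
    ∀ n, v n - v (n+1) = eFun Q c n := by
  intro n
  induction n using Nat.strong_induction_on with
  | _ n ih =>
    have h := hQv n
    rw [abel_sum (Q n) v (n+1), rowsum hQ hup n, zero_mul, add_zero,
      Finset.sum_range_succ] at h
    have h1 : ∀ l ∈ Finset.range n,
        (∑ j ∈ Finset.range (l+1), Q n j) * (v l - v (l+1)) = Qminus Q n l * eFun Q c l := by
      intro l hl
      rw [ih l (Finset.mem_range.mp hl)]; rfl
    have h2 : (∑ j ∈ Finset.range (n+1), Q n j) = -(Q n (n+1)) := Qminus_diag hQ hup n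
    rw [Finset.sum_congr rfl h1, h2] at h
    have he := eFun_rec (c := c) hup n
    have hQn := hup.1 n
    have : Q n (n+1) * (v n - v (n+1)) = Q n (n+1) * eFun Q c n := by linarith
    exact mul_left_cancel₀ (ne_of_gt hQn) this

/-! ### Bridging between `ℝ≥0∞` and `ℝ` -/

lemma jump_eq_zero_outside {Q : ℕ → ℕ → ℝ} (hup : QUpwardSkipFree Q) (i j : ℕ)
    (h : j ∉ (Finset.range (i+2)).erase i) : jumpMatrix Q i j = 0 := by
  rw [jumpMatrix]
  by_cases hji : j = i
  · simp [hji]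
  · rw [if_neg hji]
    have hj : i + 2 ≤ j := by
      by_contra hlt
      exact h (Finset.mem_erase.mpr ⟨hji, Finset.mem_range.mpr (by omega)⟩)
    rw [hup.2 i j hj]
    simp

lemma tsum_jump {Q : ℕ → ℕ → ℝ} (hup : QUpwardSkipFree Q) (φ : ℕ → ℝ≥0∞) (i : ℕ) :
    ∑' j : ℕ, jumpMatrix Q i j * φ j
      = ∑ j ∈ (Finset.range (i+2)).erase i, jumpMatrix Q i j * φ j :=
  tsum_eq_sum fun b hb => by rw [jump_eq_zero_outside hup i b hb, zero_mul]

lemma jump_real_nonneg {Q : ℕ → ℕ → ℝ} (hQ : IsQMatrix Q) {i j : ℕ} (h : j ≠ i) :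
    0 ≤ -(Q i j) / Q i i :=
  div_nonneg_of_nonpos (neg_nonpos.mpr (hQ.offdiag_nonneg i j (Ne.symm h))) (hQ.diag_neg i).le

lemma cQ_real_nonneg {Q : ℕ → ℕ → ℝ} {c : ℕ → ℝ} (hQ : IsQMatrix Q) (hc : ∀ i, 0 ≤ c i)
    (i : ℕ) : 0 ≤ -(c i) / Q i i :=
  div_nonneg_of_nonpos (neg_nonpos.mpr (hc i)) (hQ.diag_neg i).le

/-- The main supersolution comparison: if a nonnegative real function has successive
differences given by `eFun`, it dominates the potential. -/
lemma psi_le_of_diff {Q : ℕ → ℕ → ℝ} {c : ℕ → ℝ} (hQ : IsQMatrix Q)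
    (hup : QUpwardSkipFree Q) (hc : ∀ i, 0 ≤ c i) (v : ℕ → ℝ) (hv0 : ∀ n, 0 ≤ v n)
    (hdiff : ∀ n, v n - v (n+1) = eFun Q c n) (n : ℕ) :
    ctPotential Q c n ≤ ENNReal.ofReal (v n) := by
  apply ctPotential_min
  intro m
  have hQmm := hQ.diag_neg m
  have hQv := Qv_of_diff hQ hup v hdiff m
  have hmem : m ∈ Finset.range (m+2) := Finset.mem_range.mpr (by omega)
  have hsplit : Q m m * v m + ∑ j ∈ (Finset.range (m+2)).erase m, Q m j * v j
      = ∑ j ∈ Finset.range (m+2), Q m j * v j :=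
    Finset.add_sum_erase _ (fun j => Q m j * v j) hmem
  have key : -(c m)/(Q m m) + ∑ j ∈ (Finset.range (m+2)).erase m, (-(Q m j)/(Q m m)) * v j
      = v m := by
    have h1 : ∑ j ∈ (Finset.range (m+2)).erase m, (-(Q m j)/(Q m m)) * v j
        = (-1/(Q m m)) * ∑ j ∈ (Finset.range (m+2)).erase m, Q m j * v j := by
      rw [Finset.mul_sum]
      apply Finset.sum_congr rfl; intro j _; ring
    have h2 : ∑ j ∈ (Finset.range (m+2)).erase m, Q m j * v j = -(c m) - Q m m * v m := by
      linarith
    rw [h1, h2]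
    field_simp
    rw [div_eq_iff (ne_of_lt hQmm)]; ring
  have hle : cQ Q c m + ∑' j : ℕ, jumpMatrix Q m j * ENNReal.ofReal (v j)
      = ENNReal.ofReal (v m) := by
    rw [tsum_jump hup]
    have hterm : ∀ j ∈ (Finset.range (m+2)).erase m,
        jumpMatrix Q m j * ENNReal.ofReal (v j)
          = ENNReal.ofReal ((-(Q m j)/(Q m m)) * v j) := by
      intro j hj
      have hjm : j ≠ m := (Finset.mem_erase.mp hj).1
      rw [jumpMatrix, if_neg hjm, ← ENNReal.ofReal_mul (jump_real_nonneg hQ hjm)]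
    rw [Finset.sum_congr rfl hterm,
      ← ENNReal.ofReal_sum_of_nonneg
        (fun j hj => mul_nonneg (jump_real_nonneg hQ (Finset.mem_erase.mp hj).1) (hv0 j)),
      cQ, ← ENNReal.ofReal_add (cQ_real_nonneg hQ hc m)
        (Finset.sum_nonneg fun j hj =>
          mul_nonneg (jump_real_nonneg hQ (Finset.mem_erase.mp hj).1) (hv0 j)),
      key]
  exact le_of_eq hle

/-! ### The finite case -/

lemma real_fixed {Q : ℕ → ℕ → ℝ} {c : ℕ → ℝ} (hQ : IsQMatrix Q)
    (hup : QUpwardSkipFree Q) (hc : ∀ i, 0 ≤ c i)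
    (hfin : ∀ j, ctPotential Q c j ≠ ⊤) (n : ℕ) :
    ∑ j ∈ Finset.range (n+2), Q n j * (ctPotential Q c j).toReal = -(c n) := by
  have hQnn := hQ.diag_neg n
  have hfix := ctPotential_fixed Q c n
  rw [tsum_jump hup] at hfix
  have hjump_ne : ∀ j, jumpMatrix Q n j ≠ ⊤ := by
    intro j
    rw [jumpMatrix]
    split
    · simp
    · exact ENNReal.ofReal_ne_top
  have hterm_ne : ∀ j ∈ (Finset.range (n+2)).erase n,
      jumpMatrix Q n j * ctPotential Q c j ≠ ⊤ :=
    fun j _ => ENNReal.mul_ne_top (hjump_ne j) (hfin j)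
  have hsum_ne : ∑ j ∈ (Finset.range (n+2)).erase n,
      jumpMatrix Q n j * ctPotential Q c j ≠ ⊤ := by
    rw [← lt_top_iff_ne_top, ENNReal.sum_lt_top]
    exact fun j hj => lt_top_iff_ne_top.mpr (hterm_ne j hj)
  have hft := congrArg ENNReal.toReal hfix
  rw [ENNReal.toReal_add (by simp [cQ, ENNReal.ofReal_ne_top]) hsum_ne,
    ENNReal.toReal_sum hterm_ne] at hft
  have hterm_eq : ∀ j ∈ (Finset.range (n+2)).erase n,
      (jumpMatrix Q n j * ctPotential Q c j).toReal
        = (-(Q n j)/(Q n n)) * (ctPotential Q c j).toReal := by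
    intro j hj
    have hjn : j ≠ n := (Finset.mem_erase.mp hj).1
    rw [ENNReal.toReal_mul, jumpMatrix, if_neg hjn,
      ENNReal.toReal_ofReal (jump_real_nonneg hQ hjn)]
  rw [Finset.sum_congr rfl hterm_eq] at hft
  have hcQ : (cQ Q c n).toReal = -(c n)/(Q n n) :=
    ENNReal.toReal_ofReal (cQ_real_nonneg hQ hc n)
  rw [hcQ] at hft
  -- hft : f n = -(c n)/Q n n + ∑ j ∈ erase, (-(Q n j)/Q n n) * f j
  have hmem : n ∈ Finset.range (n+2) := Finset.mem_range.mpr (by omega)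
  have hsplit : Q n n * (ctPotential Q c n).toReal
        + ∑ j ∈ (Finset.range (n+2)).erase n, Q n j * (ctPotential Q c j).toReal
      = ∑ j ∈ Finset.range (n+2), Q n j * (ctPotential Q c j).toReal :=
    Finset.add_sum_erase _ (fun j => Q n j * (ctPotential Q c j).toReal) hmem
  have h1 : ∑ j ∈ (Finset.range (n+2)).erase n,
        (-(Q n j)/(Q n n)) * (ctPotential Q c j).toReal
      = (-1/(Q n n)) * ∑ j ∈ (Finset.range (n+2)).erase n,
          Q n j * (ctPotential Q c j).toReal := by
    rw [Finset.mul_sum]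
    apply Finset.sum_congr rfl; intro j _; ring
  rw [h1] at hft
  have hQnn' : Q n n ≠ 0 := ne_of_lt hQnn
  have e1 : Q n n * (ctPotential Q c n).toReal
      = -(c n) - ∑ j ∈ (Finset.range (n+2)).erase n,
          Q n j * (ctPotential Q c j).toReal := by
    rw [hft]
    field_simp
    ring
  rw [← hsplit, e1]
  ring

/-- In the all-finite case, the differences of the potential are `eFun`. -/
lemma diff_toReal {Q : ℕ → ℕ → ℝ} {c : ℕ → ℝ} (hQ : IsQMatrix Q)
    (hup : QUpwardSkipFree Q) (hc : ∀ i, 0 ≤ c i)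
    (hfin : ∀ j, ctPotential Q c j ≠ ⊤) (l : ℕ) :
    (ctPotential Q c l).toReal - (ctPotential Q c (l+1)).toReal = eFun Q c l :=
  diff_of_Qv hQ hup _ (real_fixed hQ hup hc hfin) l

/-- Reindexing equivalence for the tail sums. -/
def shiftEquiv (i : ℕ) : ℕ ≃ {m : ℕ // i ≤ m} where
  toFun n := ⟨i + n, Nat.le_add_right i n⟩
  invFun m := m.1 - i
  left_inv n := by show i + n - i = n; omega
  right_inv m := Subtype.ext (by show i + (m.1 - i) = m.1; have := m.2; omega)

lemma tail_sum_eq {Q : ℕ → ℕ → ℝ} {c : ℕ → ℝ} (hQ : IsQMatrix Q)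
    (hup : QUpwardSkipFree Q) (hc : ∀ i, 0 ≤ c i) (i : ℕ) :
    (∑' m : {m : ℕ // i ≤ m}, ∑ k ∈ Finset.range (m.1 + 1),
        ENNReal.ofReal (Ftilde Q k m.1 * c k / Q k (k + 1)))
      = ∑' n : ℕ, ENNReal.ofReal (eFun Q c (i + n)) := by
  rw [← Equiv.tsum_eq (shiftEquiv i)
    (fun m => ∑ k ∈ Finset.range (m.1 + 1),
      ENNReal.ofReal (Ftilde Q k m.1 * c k / Q k (k + 1)))]
  apply tsum_congr
  intro n
  simp only [shiftEquiv, Equiv.coe_fn_mk]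
  rw [eFun, ENNReal.ofReal_sum_of_nonneg
    (fun k _ => div_nonneg (mul_nonneg (Ftilde_nonneg hQ hup k _) (hc k)) (hup.1 k).le)]

/-- Main identity, finite case. -/
lemma main_finite {Q : ℕ → ℕ → ℝ} {c : ℕ → ℝ} (hQ : IsQMatrix Q)
    (hup : QUpwardSkipFree Q) (hc : ∀ i, 0 ≤ c i)
    (hfin : ∀ j, ctPotential Q c j ≠ ⊤) (i : ℕ) :
    ctPotential Q c i = ∑' n : ℕ, ENNReal.ofReal (eFun Q c (i + n)) := by
  set f := fun j => (ctPotential Q c j).toReal with hf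
  have hdiff : ∀ l, f l - f (l+1) = eFun Q c l := diff_toReal hQ hup hc hfin
  have he0 := eFun_nonneg hQ hup hc
  have hanti : Antitone f := antitone_nat_of_succ_le
    (fun n => by have h1 := hdiff n; have h2 := he0 n; linarith)
  have hbdd : BddBelow (Set.range f) :=
    ⟨0, by rintro x ⟨m, rfl⟩; exact ENNReal.toReal_nonneg⟩
  have hL : Tendsto f atTop (𝓝 (⨅ m, f m)) := tendsto_atTop_ciInf hanti hbdd
  have hLle : ∀ m, (⨅ m, f m) ≤ f m := fun m => ciInf_le hbdd m
  have hL0 : (0:ℝ) ≤ ⨅ m, f m := le_ciInf fun m => ENNReal.toReal_nonneg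
  have hle := psi_le_of_diff hQ hup hc (fun m => f m - (⨅ m, f m))
    (fun m => by have := hLle m; linarith)
    (fun m => by have := hdiff m; linarith) 0
  have h0 : f 0 ≤ f 0 - (⨅ m, f m) := by
    have h := ENNReal.toReal_mono ENNReal.ofReal_ne_top hle
    rwa [ENNReal.toReal_ofReal (by have := hLle 0; linarith)] at h
  have hLz : (⨅ m, f m) = 0 := le_antisymm (by linarith) hL0
  rw [hLz] at hL
  have hpart : ∀ N, ∑ n ∈ Finset.range N, eFun Q c (i + n) = f i - f (i + N) := by
    intro N
    induction N with
    | zero => simp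
    | succ N ih =>
      rw [Finset.sum_range_succ, ih, ← hdiff (i + N)]
      have hn : i + (N + 1) = (i + N) + 1 := by omega
      rw [hn]
      ring
  have htends : Tendsto (fun N => f (i + N)) atTop (𝓝 0) := by
    have h := hL.comp (tendsto_add_atTop_nat i)
    simpa [Function.comp_def, add_comm] using h
  have hsup : ∑' n : ℕ, ENNReal.ofReal (eFun Q c (i + n))
      = ⨆ N, ENNReal.ofReal (f i - f (i + N)) := by
    rw [ENNReal.tsum_eq_iSup_nat]
    congr 1; funext N
    rw [← ENNReal.ofReal_sum_of_nonneg (fun n _ => he0 (i+n)), hpart N]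
  have hfi : ctPotential Q c i = ENNReal.ofReal (f i) :=
    (ENNReal.ofReal_toReal (hfin i)).symm
  rw [hsup, hfi]
  apply le_antisymm
  · have ht2 : Tendsto (fun N => ENNReal.ofReal (f i - f (i + N))) atTop
        (𝓝 (ENNReal.ofReal (f i - 0))) :=
      (ENNReal.continuous_ofReal.tendsto _).comp (tendsto_const_nhds.sub htends)
    rw [sub_zero] at ht2
    exact le_of_tendsto ht2 (Filter.Eventually.of_forall fun N =>
      le_iSup (fun N => ENNReal.ofReal (f i - f (i + N))) N)
  · exact iSup_le fun N => ENNReal.ofReal_le_ofReal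
      (by have : (0:ℝ) ≤ f (i+N) := ENNReal.toReal_nonneg; linarith)

/-- Main identity, infinite case. -/
lemma main_infinite {Q : ℕ → ℕ → ℝ} {c : ℕ → ℝ} (hQ : IsQMatrix Q)
    (hup : QUpwardSkipFree Q) (hc : ∀ i, 0 ≤ c i)
    (hinf : ∀ j, ctPotential Q c j = ⊤) (i : ℕ) :
    (∑' n : ℕ, ENNReal.ofReal (eFun Q c (i + n))) = ⊤ := by
  by_contra hT
  set T := fun n => ∑' k : ℕ, ENNReal.ofReal (eFun Q c (n + k)) with hTdef
  have hrec : ∀ n, T n = ENNReal.ofReal (eFun Q c n) + T (n+1) := by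
    intro n
    rw [hTdef]
    simp only
    rw [tsum_eq_zero_add' ENNReal.summable]
    congr 1
    apply tsum_congr
    intro k
    have h : n + (k+1) = (n+1) + k := by omega
    rw [h]
  have hiff : ∀ n, (T n ≠ ⊤ ↔ T (n+1) ≠ ⊤) := by
    intro n
    rw [hrec n]
    simp [ENNReal.add_eq_top, ENNReal.ofReal_ne_top]
  have h0 : ∀ n, (T n ≠ ⊤ ↔ T 0 ≠ ⊤) := by
    intro n
    induction n with
    | zero => exact Iff.rfl
    | succ n ih => rw [← hiff n]; exact ih
  have hall : ∀ n, T n ≠ ⊤ := fun n => (h0 n).mpr ((h0 i).mp hT)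
  have hwdiff : ∀ n, (T n).toReal - (T (n+1)).toReal = eFun Q c n := by
    intro n
    rw [hrec n, ENNReal.toReal_add ENNReal.ofReal_ne_top (hall (n+1)),
      ENNReal.toReal_ofReal (eFun_nonneg hQ hup hc n)]
    ring
  have hle := psi_le_of_diff hQ hup hc (fun n => (T n).toReal)
    (fun n => ENNReal.toReal_nonneg) hwdiff i
  rw [hinf i] at hle
  exact ENNReal.ofReal_ne_top (top_le_iff.mp hle)

end CTAux

theorem ct_potential_of_upward_skip_free
    (Q : ℕ → ℕ → ℝ) (hQ : IsQMatrix Q) (hirr : QIrreducible Q)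
    (hup : QUpwardSkipFree Q)
    (c : ℕ → ℝ) (hc : ∀ i, 0 ≤ c i) :
    (∀ i : ℕ, ctPotential Q c i =
        ∑' m : {m : ℕ // i ≤ m}, ∑ k ∈ Finset.range (m.1 + 1),
          ENNReal.ofReal (Ftilde Q k m.1 * c k / Q k (k + 1))) ∧
    ((∀ i : ℕ, ctPotential Q c i < ∞) ↔ ctPotential Q c 0 < ∞) := by
  have hdich : (∀ j, ctPotential Q c j ≠ ⊤) ∨ (∀ j, ctPotential Q c j = ⊤) := by
    by_cases h : ∀ j, ctPotential Q c j ≠ ⊤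
    · exact Or.inl h
    · push_neg at h
      obtain ⟨a, ha⟩ := h
      refine Or.inr fun b => ?_
      by_contra hb
      exact absurd (CTAux.potential_ne_top_propagate Q c hirr hb a) (not_not.mpr ha)
  constructor
  · intro i
    rw [CTAux.tail_sum_eq hQ hup hc i]
    rcases hdich with hfin | hinf
    · exact CTAux.main_finite hQ hup hc hfin i
    · rw [hinf i, CTAux.main_infinite hQ hup hc hinf i]
  · constructor
    · intro h
      exact h 0
    · intro h0 i
      rw [lt_top_iff_ne_top]
      exact CTAux.potential_ne_top_propagate Q c hirr (lt_top_iff_ne_top.mp h0) i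
end
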